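/- For 0 < δ < 1 and ν = (1-√δ)/(1+√δ), the graph r = χ⁻(θ) = θ - h_{1/ν}(θ) over θ ∈ (-1/2, 1/2) is invariant under the Suris map f_δ, and on this graph f_δ conjugates to h_ν; explicitly, f_δ(θ, χ⁻(θ)) = (h_ν(θ), χ⁻(h_ν(θ))). -/

import Mathlib

open Real
set_option maxHeartbeats 1000000

noncomputable def h (ν θ : ℝ) : ℝ :=
  (2 / π) * arctan (((ν + 1) * tan (π * θ / 2) + (ν - 1)) /
    ((ν - 1) * tan (π * θ / 2) + (ν + 1)))

noncomputable def Vd' (δ θ : ℝ) : ℝ :=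
  -(2 / π) * arctan (δ * sin (2 * π * θ) / (1 + δ * cos (2 * π * θ)))

noncomputable def suris (δ : ℝ) (p : ℝ × ℝ) : ℝ × ℝ :=
  (p.1 + p.2 + Vd' δ p.1, p.2 + Vd' δ p.1)

theorem chi_minus_invariant (δ : ℝ) (hδ : 0 < δ) (hδ1 : δ < 1)
    (θ : ℝ) (hθ : θ ∈ Set.Ioo (-(1:ℝ)/2) (1/2)) :
    suris δ (θ, θ - h (1 / ((1 - Real.sqrt δ) / (1 + Real.sqrt δ))) θ) =
      (h ((1 - Real.sqrt δ) / (1 + Real.sqrt δ)) θ,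
       h ((1 - Real.sqrt δ) / (1 + Real.sqrt δ)) θ
         - h (1 / ((1 - Real.sqrt δ) / (1 + Real.sqrt δ)))
             (h ((1 - Real.sqrt δ) / (1 + Real.sqrt δ)) θ)) := by
  obtain ⟨hθ1, hθ2⟩ := hθ
  have hπ : (0:ℝ) < π := Real.pi_pos
  have hπ' : (π:ℝ) ≠ 0 := ne_of_gt hπ
  -- basic facts about s = sqrt δ and ν
  set s := Real.sqrt δ with hs
  have hs0 : 0 < s := Real.sqrt_pos.mpr hδ
  have hδs : s ^ 2 = δ := Real.sq_sqrt hδ.le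
  have hs1 : s < 1 := by
    rw [hs, show (1:ℝ) = Real.sqrt 1 by simp]
    exact Real.sqrt_lt_sqrt hδ.le hδ1
  set ν := (1 - s) / (1 + s) with hν
  have hν0 : 0 < ν := div_pos (by linarith) (by linarith)
  have hν1 : ν < 1 := by
    rw [hν, div_lt_one (by linarith)]; linarith
  have hνs : 1 - ν = s * (1 + ν) := by
    rw [hν]; field_simp; ring
  have hδν : δ * (1 + ν) ^ 2 = (1 - ν) ^ 2 := by
    rw [hνs, ← hδs]; ring
  have hδeq : δ = (1 - ν)^2 / (1 + ν)^2 := by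
    rw [← hδν]; field_simp
  clear_value s ν
  set νi := 1 / ν with hνi
  have hνi0 : 0 < νi := by rw [hνi]; positivity
  have hννi : ν * νi = 1 := by rw [hνi]; field_simp
  clear_value νi
  -- the tangent variable t
  have hmul1 : π * (-1/2) < π * θ := by
    exact mul_lt_mul_of_pos_left hθ1 hπ
  have hmul2 : π * θ < π * (1/2) := mul_lt_mul_of_pos_left hθ2 hπ
  have hφ1 : -(π/2) < π * θ / 2 := by linarith
  have hφ2 : π * θ / 2 < π/2 := by linarith
  set t := tan (π * θ / 2) with ht
  clear_value t
  have ht2 : t < 1 := by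
    rw [ht, ← Real.tan_pi_div_four]
    exact Real.tan_lt_tan_of_lt_of_lt_pi_div_two hφ1 (by linarith) (by linarith)
  have ht1 : -1 < t := by
    rw [ht, show (-1:ℝ) = tan (-(π/4)) by rw [Real.tan_neg, Real.tan_pi_div_four]]
    exact Real.tan_lt_tan_of_lt_of_lt_pi_div_two (by linarith) hφ2 (by linarith)
  have ht2' : 0 < 1 - t^2 := by
    have := mul_pos (show (0:ℝ) < 1 - t by linarith) (show (0:ℝ) < 1 + t by linarith)
    linarith [this]
  have hνt : 0 < ν * (1 + t) := mul_pos hν0 (by linarith)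
  have hνit : 0 < νi * (1 + t) := mul_pos hνi0 (by linarith)
  have hνb0 : 0 < (1 - ν) * (1 + t) := mul_pos (by linarith) (by linarith)
  -- a and b
  have hda : 0 < (ν - 1) * t + (ν + 1) := by linarith [hνt]
  have hdb : 0 < (νi - 1) * t + (νi + 1) := by linarith [hνit]
  have hdb' : 0 < (1 - ν) * t + (1 + ν) := by linarith [hνb0]
  set a := ((ν + 1) * t + (ν - 1)) / ((ν - 1) * t + (ν + 1)) with ha
  set b := ((νi + 1) * t + (νi - 1)) / ((νi - 1) * t + (νi + 1)) with hb
  clear_value a b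
  have ha2 : a < 1 := by rw [ha, div_lt_one hda]; linarith
  have ha1 : -1 < a := by rw [ha, lt_div_iff₀ hda]; linarith [hνt]
  have hb2 : b < 1 := by rw [hb, div_lt_one hdb]; linarith
  have hb1 : -1 < b := by rw [hb, lt_div_iff₀ hdb]; linarith [hνit]
  have hb' : b = ((1 + ν) * t + (1 - ν)) / ((1 - ν) * t + (1 + ν)) := by
    rw [hb, div_eq_div_iff hdb.ne' hdb'.ne']
    linear_combination (2 - 2*t^2) * hννi
  -- h values
  have hhν : h ν θ = 2 / π * arctan a := by simp only [h, ← ht, ← ha]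
  have hhνi : h νi θ = 2 / π * arctan b := by simp only [h, ← ht, ← hb]
  -- part (B) : h νi (h ν θ) = θ
  have htan_h' : tan (π * (2 / π * arctan a) / 2) = a := by
    rw [show π * (2 / π * arctan a) / 2 = arctan a by field_simp, tan_arctan]
  have hdenB : 0 < (νi - 1) * a + (νi + 1) := by
    linarith [mul_pos hνi0 (show (0:ℝ) < 1 + a by linarith)]
  have hinner : ((νi + 1) * a + (νi - 1)) / ((νi - 1) * a + (νi + 1)) = t := by
    rw [div_eq_iff hdenB.ne', ha]
    have hda' : t * (ν - 1) + (ν + 1) ≠ 0 := by rw [mul_comm t]; exact hda.ne'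
    field_simp
    linear_combination (2 - 2*t^2) * hννi
  have hB : h νi (h ν θ) = θ := by
    have e : h νi (h ν θ) = 2/π * arctan t := by
      simp only [h, ← ht, ← ha, htan_h', hinner]
    rw [e, ht, arctan_tan hφ1 hφ2]
    field_simp
  -- part (A)
  have hx1 : -(π/2) < π * θ := by linarith
  have hx2 : π * θ < π/2 := by linarith
  have hcosx : 0 < cos (π*θ) := Real.cos_pos_of_mem_Ioo ⟨hx1, hx2⟩
  set U := 2*t/(1 - t^2) with hU
  clear_value U
  have hUtan : tan (π * θ) = U := by
    rw [show π*θ = 2*(π*θ/2) by ring, tan_two_mul, ← ht, ← hU]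
  have hU1 : (0:ℝ) < 1 + U^2 := by positivity
  have hU2 : 0 ≤ (1-δ) * U^2 := mul_nonneg (by linarith) (sq_nonneg U)
  set D := (1+δ) + (1-δ)*U^2 with hDdef
  clear_value D
  have hD : (0:ℝ) < D := by rw [hDdef]; linarith
  have hcossq : cos (π*θ)^2 = 1/(1 + U^2) := by
    rw [← hUtan, ← Real.inv_one_add_tan_sq hcosx.ne', one_div]
  have hsin2 : sin (2*π*θ) = 2*U/(1 + U^2) := by
    have e : sin (2*π*θ) = 2 * tan (π*θ) * cos (π*θ)^2 := by
      rw [show 2*π*θ = 2*(π*θ) by ring, sin_two_mul, ← Real.tan_mul_cos hcosx.ne']; ring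
    rw [e, hUtan, hcossq]; field_simp
  have hcos2 : cos (2*π*θ) = (1 - U^2)/(1 + U^2) := by
    have e : cos (2*π*θ) = 2 * cos (π*θ)^2 - 1 := by
      rw [show 2*π*θ = 2*(π*θ) by ring, cos_two_mul]
    rw [e, hcossq]; field_simp; ring
  have hw : δ * sin (2 * π * θ) / (1 + δ * cos (2 * π * θ)) = 2*δ*U/D := by
    have e : 1 + δ * cos (2*π*θ) = D/(1 + U^2) := by
      rw [hcos2, hDdef]; field_simp; ring
    rw [hsin2, e, div_div_eq_mul_div]
    congr 1
    field_simp
    try ring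
  have hVd : Vd' δ θ = -(2/π) * arctan (2*δ*U/D) := by
    rw [Vd', hw]
  -- combining arctans
  have hab : a * b < 1 := by
    have h1 : 0 < (1-a)*(1+b) := mul_pos (by linarith) (by linarith)
    have h2 : 0 < (1+a)*(1-b) := mul_pos (by linarith) (by linarith)
    linarith [h1, h2]
  have h1ab : 0 < 1 - a*b := by linarith
  have hXval : (a + b)/(1 - a*b) = (1-δ)*U/(1+δ) := by
    rw [div_eq_div_iff h1ab.ne' (show (0:ℝ) ≠ 1+δ by linarith).symm]
    rw [ha, hb', hU, hδeq]
    have hda' : t * (ν - 1) + (ν + 1) ≠ 0 := by rw [mul_comm t]; exact hda.ne'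
    have hdb'' : t * (1 - ν) + (1 + ν) ≠ 0 := by rw [mul_comm t]; exact hdb'.ne'
    have ht2'' := ht2'.ne'
    have hν1' : (1 + ν) ≠ 0 := by linarith
    field_simp
    ring
  have hXW : (1-δ)*U/(1+δ) * (2*δ*U/D) < 1 := by
    rw [div_mul_div_comm, div_lt_one (by positivity)]
    rw [hDdef]
    linarith [sq_nonneg ((1-δ)*U), show (0:ℝ) < (1+δ)^2 by positivity]
  have h1XW : (1:ℝ) - (1-δ)*U/(1+δ) * (2*δ*U/D) ≠ 0 := by
    have : (0:ℝ) < 1 - (1-δ)*U/(1+δ) * (2*δ*U/D) := by linarith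
    exact this.ne'
  have hstep2 : arctan ((1-δ)*U/(1+δ)) + arctan (2*δ*U/D) = arctan U := by
    rw [arctan_add hXW]
    congr 1
    rw [div_eq_iff h1XW, hDdef]
    field_simp
    ring
  have harctanU : arctan U = π * θ := by
    rw [← hUtan, arctan_tan hx1 hx2]
  have hA : arctan a + arctan b + arctan (2*δ*U/D) = π * θ := by
    rw [arctan_add hab, hXval, hstep2, harctanU]
  -- assemble
  have hA2 : 2/π * arctan a + 2/π * arctan b + 2/π * arctan (2*δ*U/D) = 2*θ := by
    have e1 : 2/π * (π*θ) = 2*θ := by field_simp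
    calc 2/π * arctan a + 2/π * arctan b + 2/π * arctan (2*δ*U/D)
        = 2/π * (arctan a + arctan b + arctan (2*δ*U/D)) := by ring
      _ = 2/π * (π*θ) := by rw [hA]
      _ = 2*θ := e1
  show (θ + (θ - h νi θ) + Vd' δ θ, (θ - h νi θ) + Vd' δ θ) = _
  rw [hB, hhν, hhνi, hVd, Prod.mk.injEq]
  constructor <;> [skip; skip] <;> linarith [hA2]
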